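/- In ℝ^N = ℝ^m × ℝ^k with coordinates (z,t), let α > 0 and define ρ_α(z,t) = (|z|^(2(α+1)) + 4(α+1)²|t|²)^(1/(2(α+1))). Then for (z,t) ≠ (0,0), |∇_z ρ_α|² + (|z|^(2α)/4)|∇_t ρ_α|² = |z|^(2α)/ρ_α(z,t)^(2α). -/

import Mathlib

open Real

lemma aux_grad {E : Type*} [NormedAddCommGroup E] [InnerProductSpace ℝ E] [CompleteSpace E]
    {f : E → ℝ} {x v : E} {c : ℝ} (h : HasFDerivAt f (c • innerSL ℝ v) x) :
    HasGradientAt f (c • v) x := by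
  have hd : InnerProductSpace.toDual ℝ E (c • v) = c • innerSL ℝ v := by
    ext y
    simp [InnerProductSpace.toDual_apply_apply, inner_smul_left]
  rw [hasGradientAt_iff_hasFDerivAt, hd]
  exact h

/-- The α-gradient of the Baouendi pseudo-gauge: `|∇_α ρ_α|² = |z|^{2α}/ρ_α^{2α}`. -/
theorem stmt_6 (m k : ℕ) (α : ℝ) (hα : 0 < α)
    (ρ : EuclideanSpace ℝ (Fin m) → EuclideanSpace ℝ (Fin k) → ℝ)
    (hρ : ρ = fun z t => (‖z‖ ^ (2 * (α + 1)) + 4 * (α + 1) ^ 2 * ‖t‖ ^ 2) ^ (1 / (2 * (α + 1)))) :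
    ∀ (z : EuclideanSpace ℝ (Fin m)) (t : EuclideanSpace ℝ (Fin k)), (z, t) ≠ (0, 0) →
      ‖gradient (fun z' => ρ z' t) z‖ ^ 2 +
        ‖z‖ ^ (2 * α) / 4 * ‖gradient (fun t' => ρ z t') t‖ ^ 2 =
      ‖z‖ ^ (2 * α) / ρ z t ^ (2 * α) := by
  subst hρ
  intro z t hzt
  beta_reduce
  have hα1 : (0:ℝ) < α + 1 := by linarith
  set c : ℝ := 4 * (α + 1) ^ 2 with hc
  set e : ℝ := 1 / (2 * (α + 1)) with he
  set a : ℝ := ‖z‖ ^ 2 with ha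
  set b : ℝ := ‖t‖ ^ 2 with hb
  have ha0 : 0 ≤ a := sq_nonneg _
  have hb0 : 0 ≤ b := sq_nonneg _
  set S : ℝ := a ^ (α + 1) + c * b with hS
  have hor : z ≠ 0 ∨ t ≠ 0 := by
    by_contra h
    push_neg at h
    exact hzt (by simp [Prod.ext_iff, h.1, h.2])
  have hSpos : 0 < S := by
    rcases hor with hz | ht
    · have : 0 < a := by rw [ha]; exact pow_pos (norm_pos_iff.mpr hz) 2
      have h1 : 0 < a ^ (α + 1) := Real.rpow_pos_of_pos this _
      have h2 : 0 ≤ c * b := by positivity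
      linarith
    · have hbp : 0 < b := by rw [hb]; exact pow_pos (norm_pos_iff.mpr ht) 2
      have h2 : 0 < c * b := by positivity
      have h1 : 0 ≤ a ^ (α + 1) := Real.rpow_nonneg ha0 _
      linarith
  have keyz : ∀ w : EuclideanSpace ℝ (Fin m),
      ‖w‖ ^ (2 * (α + 1)) = ((‖w‖ ^ 2 : ℝ)) ^ (α + 1) := by
    intro w
    rw [Real.rpow_mul (norm_nonneg w), Real.rpow_two]
  have keyz2 : ‖z‖ ^ (2 * α) = a ^ α := by
    rw [ha, Real.rpow_mul (norm_nonneg z), Real.rpow_two]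
  -- gradient in z
  have hu : HasFDerivAt (fun w : EuclideanSpace ℝ (Fin m) => (‖w‖ ^ 2 : ℝ))
      (2 • innerSL ℝ z) z := (hasStrictFDerivAt_norm_sq z).hasFDerivAt
  have h1 : HasFDerivAt (fun w : EuclideanSpace ℝ (Fin m) => ((‖w‖ ^ 2 : ℝ)) ^ (α + 1) + c * b)
      (((α + 1) * a ^ α) • (2 • innerSL ℝ z)) z := by
    have := (Real.hasDerivAt_rpow_const (x := a) (p := α + 1)
      (Or.inr (by linarith))).comp_hasFDerivAt z hu
    simpa [Function.comp, add_sub_cancel_right] using this.add_const (c * b)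
  have h2 : HasFDerivAt (fun w : EuclideanSpace ℝ (Fin m) => (((‖w‖ ^ 2 : ℝ)) ^ (α + 1) + c * b) ^ e)
      ((e * S ^ (e - 1)) • (((α + 1) * a ^ α) • (2 • innerSL ℝ z))) z := by
    have := (Real.hasDerivAt_rpow_const (x := S) (p := e)
      (Or.inl hSpos.ne')).comp_hasFDerivAt z h1
    exact this
  have hgz : HasGradientAt
      (fun z' : EuclideanSpace ℝ (Fin m) => (‖z'‖ ^ (2 * (α + 1)) + c * b) ^ e)
      ((S ^ (e - 1) * a ^ α) • z) z := by
    have hfeq : (fun z' : EuclideanSpace ℝ (Fin m) => (‖z'‖ ^ (2 * (α + 1)) + c * b) ^ e)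
        = fun w => (((‖w‖ ^ 2 : ℝ)) ^ (α + 1) + c * b) ^ e := by
      funext w; rw [keyz w]
    rw [hfeq]
    apply aux_grad
    refine h2.congr_fderiv ?_
    ext y
    simp only [ContinuousLinearMap.smul_apply, smul_eq_mul, nsmul_eq_mul]
    push_cast
    rw [he]
    field_simp
  -- gradient in t
  have hv : HasFDerivAt (fun s : EuclideanSpace ℝ (Fin k) => (‖s‖ ^ 2 : ℝ))
      (2 • innerSL ℝ t) t := (hasStrictFDerivAt_norm_sq t).hasFDerivAt
  have h1t : HasFDerivAt (fun s : EuclideanSpace ℝ (Fin k) => a ^ (α + 1) + c * ‖s‖ ^ 2)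
      (c • (2 • innerSL ℝ t)) t := by
    simpa [smul_eq_mul] using ((hv.const_smul c).const_add (a ^ (α + 1)))
  have h2t : HasFDerivAt (fun s : EuclideanSpace ℝ (Fin k) => (a ^ (α + 1) + c * ‖s‖ ^ 2) ^ e)
      ((e * S ^ (e - 1)) • (c • (2 • innerSL ℝ t))) t := by
    have := (Real.hasDerivAt_rpow_const (x := S) (p := e)
      (Or.inl hSpos.ne')).comp_hasFDerivAt t h1t
    exact this
  have hgt : HasGradientAt
      (fun t' : EuclideanSpace ℝ (Fin k) => (‖z‖ ^ (2 * (α + 1)) + c * ‖t'‖ ^ 2) ^ e)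
      ((4 * (α + 1) * S ^ (e - 1)) • t) t := by
    have hfeq : (fun t' : EuclideanSpace ℝ (Fin k) => (‖z‖ ^ (2 * (α + 1)) + c * ‖t'‖ ^ 2) ^ e)
        = fun s => (a ^ (α + 1) + c * ‖s‖ ^ 2) ^ e := by
      funext s; rw [keyz z, ha]
    rw [hfeq]
    apply aux_grad
    refine h2t.congr_fderiv ?_
    ext y
    simp only [ContinuousLinearMap.smul_apply, smul_eq_mul, nsmul_eq_mul]
    push_cast
    rw [he, hc]
    field_simp
  rw [hgz.gradient, hgt.gradient, keyz2, keyz z]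
  rw [norm_smul, norm_smul, Real.norm_eq_abs, Real.norm_eq_abs, mul_pow, mul_pow,
    sq_abs, sq_abs, ← ha, ← hb, ← hS]
  -- now pure real algebra
  rcases eq_or_lt_of_le ha0 with haz | hapos
  · rw [← haz, Real.zero_rpow hα.ne']
    ring
  · have hane : a ≠ 0 := hapos.ne'
    have hexp : e - 1 + (e - 1) + 1 = -(e * (2 * α)) := by
      rw [he]; field_simp; ring
    have hmul : a ^ α * a = a ^ (α + 1) := (Real.rpow_add_one hane α).symm
    calc (S ^ (e - 1) * a ^ α) ^ 2 * a + a ^ α / 4 * ((4 * (α + 1) * S ^ (e - 1)) ^ 2 * b)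
        = S ^ (e - 1) * S ^ (e - 1) * (a ^ α * (a ^ α * a + c * b)) := by rw [hc]; ring
      _ = S ^ (e - 1) * S ^ (e - 1) * (a ^ α * S) := by rw [hmul, ← hS]
      _ = a ^ α * S ^ (e - 1 + (e - 1) + 1) := by
          rw [Real.rpow_add hSpos, Real.rpow_add hSpos, Real.rpow_one]; ring
      _ = a ^ α * S ^ (-(e * (2 * α))) := by rw [hexp]
      _ = a ^ α / (S ^ e) ^ (2 * α) := by
          rw [Real.rpow_neg hSpos.le, Real.rpow_mul hSpos.le, ← div_eq_mul_inv]
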